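/- Let n ≥ 1, let H : ℝⁿ × ℝⁿ → ℝ be C¹, let α ∈ ℝ, and set G = 2(H + α). Let z = (q,p) : I → ℝⁿ × ℝⁿ be a curve on an open interval I that solves Hamilton's equations for H, with H(q(t),p(t)) = 0 for all t ∈ I and α ≠ 0. Let τ : I → J be a C¹ diffeomorphism onto an open interval J with τ'(t) = 1/G(q(t),p(t)) for all t ∈ I, and let t(·) : J → I be its inverse. Then the reparametrized curve w(τ) = (q(t(τ)), p(t(τ))) solves Hamilton's equations for the Hamiltonian H̃ = (H + α)² on J. -/

import Mathlib

/-- A curve `(q, p)` on the set `I ⊆ ℝ` solves Hamilton's equations for the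
Hamiltonian `K : ℝⁿ × ℝⁿ → ℝ`:  `qᵢ' = ∂K/∂pᵢ` and `pᵢ' = −∂K/∂qᵢ` on `I`. -/
def IsHamiltonianSolOn (n : ℕ) (K : (Fin n → ℝ) × (Fin n → ℝ) → ℝ)
    (q p : ℝ → (Fin n → ℝ)) (I : Set ℝ) : Prop :=
  ∀ t ∈ I, ∀ i : Fin n,
    HasDerivAt (fun t' => q t' i) (fderiv ℝ K (q t, p t) (0, Pi.single i 1)) t ∧
    HasDerivAt (fun t' => p t' i) (-(fderiv ℝ K (q t, p t) (Pi.single i 1, 0))) t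

/-- **Time reparametrization with `G = 2(H+α)` gives the Hamiltonian `(H+α)²`.**
If `(q,p)` solves Hamilton's equations for `H` on the open interval `I`, stays
on the level `H = 0`, `α ≠ 0`, and `τ : I → J` is a C¹ diffeomorphism with
`τ'(t) = 1/G(q(t),p(t))` where `G = 2(H+α)`, with inverse `σ : J → I`, then the
reparametrized curve `s ↦ (q(σ(s)), p(σ(s)))` solves Hamilton's equations for
the Hamiltonian `H̃ = (H+α)²` on `J`. -/
theorem reparam_hamiltonian_flow_sq
    (n : ℕ) (hn : 1 ≤ n)
    (H : (Fin n → ℝ) × (Fin n → ℝ) → ℝ) (α : ℝ) (hα : α ≠ 0)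
    (G : (Fin n → ℝ) × (Fin n → ℝ) → ℝ)
    (hGdef : G = fun z => 2 * (H z + α))
    (hH : ContDiff ℝ 1 H)
    (I J : Set ℝ) (hI : IsOpen I) (hIconn : I.OrdConnected) (hIne : I.Nonempty)
    (hJ : IsOpen J) (hJconn : J.OrdConnected)
    (q p : ℝ → (Fin n → ℝ))
    (hsol : IsHamiltonianSolOn n H q p I)
    (hH0 : ∀ t ∈ I, H (q t, p t) = 0)
    (τ σ : ℝ → ℝ)
    (hτmaps : Set.MapsTo τ I J) (hσmaps : Set.MapsTo σ J I)
    (hστ : ∀ t ∈ I, σ (τ t) = t) (hτσ : ∀ s ∈ J, τ (σ s) = s)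
    (hτ' : ∀ t ∈ I, HasDerivAt τ (1 / G (q t, p t)) t)
    (hσdiff : ∀ s ∈ J, DifferentiableAt ℝ σ s) :
    IsHamiltonianSolOn n (fun z => (H z + α) ^ 2)
      (fun s => q (σ s)) (fun s => p (σ s)) J := by
  intro s hs i
  set t := σ s with htdef
  have ht : t ∈ I := hσmaps hs
  -- fderiv of the squared Hamiltonian
  have hfd : ∀ z, fderiv ℝ (fun z => (H z + α) ^ 2) z
      = (2 * (H z + α)) • fderiv ℝ H z := by
    intro z
    have hf : HasFDerivAt (fun z => H z + α) (fderiv ℝ H z) z :=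
      ((hH.differentiable one_ne_zero z).hasFDerivAt).add_const α
    have hsq : HasFDerivAt (fun z => (H z + α) ^ 2)
        ((2 * (H z + α)) • fderiv ℝ H z) z := by
      have h2 := hf.mul hf
      simp only [pow_two]
      convert h2 using 1
      case e'_12 => rw [two_mul, add_smul]
      all_goals rfl
    exact hsq.fderiv
  -- value of G on the orbit
  have hGval : G (q t, p t) = 2 * α := by
    simp [hGdef, hH0 t ht]
  have hG0 : G (q t, p t) ≠ 0 := by
    rw [hGval]; exact mul_ne_zero two_ne_zero hα
  -- derivative of σ
  have hσ' : HasDerivAt σ (G (q t, p t)) s := by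
    have hd : HasDerivAt σ (deriv σ s) s := (hσdiff s hs).hasDerivAt
    have hcomp : HasDerivAt (τ ∘ σ) (1 / G (q t, p t) * deriv σ s) s :=
      (hτ' t ht).comp s hd
    have hid : (τ ∘ σ) =ᶠ[nhds s] id := by
      filter_upwards [hJ.mem_nhds hs] with x hx
      exact hτσ x hx
    have hcomp' : HasDerivAt id (1 / G (q t, p t) * deriv σ s) s :=
      hcomp.congr_of_eventuallyEq hid.symm
    have h1 : (1 : ℝ) / G (q t, p t) * deriv σ s = 1 :=
      hcomp'.unique (hasDerivAt_id s)
    have : deriv σ s = G (q t, p t) := by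
      field_simp at h1
      linarith [h1]
    rwa [this] at hd
  have hfds : fderiv ℝ (fun z => (H z + α) ^ 2) (q t, p t)
      = (2 * α) • fderiv ℝ H (q t, p t) := by
    rw [hfd, hH0 t ht]; ring_nf
  obtain ⟨hq, hp⟩ := hsol t ht i
  constructor
  · have := hq.comp s hσ'
    convert this using 1
    case e'_9 =>
      rw [hfds, hGval]
      simp [mul_comm]
    all_goals rfl
  · have := hp.comp s hσ'
    convert this using 1
    case e'_9 =>
      rw [hfds, hGval]
      simp [mul_comm]
    all_goals rfl
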